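/- Fix a constant c > 0 and let P^n_c denote the set of vectors in R^n with nonnegative entries arranged in non-increasing order whose entries sum to c. Then for any x, y ∈ P^n_c there exists a unique z ∈ P^n_c such that: (i) x ≺ z and y ≺ z, and (ii) for every w ∈ P^n_c with x ≺ w and y ≺ w, one has z ≺ w. In other words, any two elements of P^n_c have a unique least upper bound with respect to majorization. -/

import Mathlib

open scoped BigOperators

/-- Sum of the `k` largest entries of `x`: the maximum of `∑ i ∈ s, x i`
over all `k`-element index sets `s`. -/
noncomputable def kMaxSum {ι : Type*} [Fintype ι] (x : ι → ℝ) (k : ℕ) : ℝ :=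
  sSup {t : ℝ | ∃ s : Finset ι, s.card = k ∧ t = ∑ i ∈ s, x i}

/-- `x ≺ y`: for every `k`, the sum of the `k` largest entries of `x` is at most
the sum of the `k` largest entries of `y`. -/
def Majorized {ι κ : Type*} [Fintype ι] [Fintype κ] (x : ι → ℝ) (y : κ → ℝ) : Prop :=
  ∀ k : ℕ, kMaxSum x k ≤ kMaxSum y k


noncomputable def pS {n : ℕ} (x : Fin n → ℝ) (k : ℕ) : ℝ :=
  ∑ j ∈ Finset.range k, if h : j < n then x ⟨j, h⟩ else 0

lemma pS_zero {n : ℕ} (x : Fin n → ℝ) : pS x 0 = 0 := by simp [pS]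

lemma pS_succ {n : ℕ} (x : Fin n → ℝ) {k : ℕ} (hk : k < n) :
    pS x (k + 1) = pS x k + x ⟨k, hk⟩ := by
  simp [pS, Finset.sum_range_succ, dif_pos hk]

lemma pS_univ {n : ℕ} (x : Fin n → ℝ) : pS x n = ∑ i, x i := by
  rw [pS, ← Fin.sum_univ_eq_sum_range (fun j => if h : j < n then x ⟨j, h⟩ else 0) n]
  exact Finset.sum_congr rfl fun i _ => by simp

lemma pS_mono {n : ℕ} {x : Fin n → ℝ} (hx : ∀ i, 0 ≤ x i) : Monotone (pS x) := by
  intro a b hab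
  apply Finset.sum_le_sum_of_subset_of_nonneg (Finset.range_subset_range.mpr hab)
  intro j _ _
  by_cases h : j < n
  · simpa [h] using hx ⟨j, h⟩
  · simp [h]

lemma strictMono_val_le {k n : ℕ} {f : Fin k → Fin n} (hf : StrictMono f) :
    ∀ m (hm : m < k), m ≤ (f ⟨m, hm⟩ : ℕ) := by
  intro m
  induction m with
  | zero => exact fun _ => Nat.zero_le _
  | succ p ih =>
    intro hm
    have hp : p < k := Nat.lt_of_succ_lt hm
    have h1 : f ⟨p, hp⟩ < f ⟨p + 1, hm⟩ := hf (by simp [Fin.lt_def])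
    have h2 := ih hp
    have h3 : (f ⟨p, hp⟩ : ℕ) < (f ⟨p + 1, hm⟩ : ℕ) := h1
    omega

lemma kMaxSum_eq_pS {n : ℕ} {x : Fin n → ℝ} (hxa : Antitone x) {k : ℕ} (hk : k ≤ n) :
    kMaxSum x k = pS x k := by
  apply IsGreatest.csSup_eq
  constructor
  · refine ⟨Finset.univ.map (Fin.castLEEmb hk), ?_, ?_⟩
    · simp
    · rw [Finset.sum_map, pS,
        ← Fin.sum_univ_eq_sum_range (fun j => if h : j < n then x ⟨j, h⟩ else 0) k]
      refine Finset.sum_congr rfl fun j _ => ?_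
      rw [dif_pos (lt_of_lt_of_le j.2 hk)]
      rfl
  · rintro t ⟨s, hs, rfl⟩
    have hf := (s.orderEmbOfFin hs).strictMono
    have hmap : s = Finset.univ.map (s.orderEmbOfFin hs).toEmbedding := by
      apply Finset.coe_injective
      rw [Finset.coe_map, Finset.coe_univ, Set.image_univ]
      simp
    have hsum : ∑ i ∈ s, x i = ∑ j : Fin k, x (s.orderEmbOfFin hs j) := by
      conv_lhs => rw [hmap]
      rw [Finset.sum_map]
      rfl
    rw [hsum, pS, ← Fin.sum_univ_eq_sum_range (fun j => if h : j < n then x ⟨j, h⟩ else 0) k]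
    apply Finset.sum_le_sum
    intro j _
    rw [dif_pos (lt_of_lt_of_le j.2 hk)]
    apply hxa
    exact Fin.le_def.mpr (by simpa using strictMono_val_le hf j.1 j.2)

lemma kMaxSum_eq_zero {n : ℕ} (x : Fin n → ℝ) {k : ℕ} (hk : n < k) : kMaxSum x k = 0 := by
  have he : {t : ℝ | ∃ s : Finset (Fin n), s.card = k ∧ t = ∑ i ∈ s, x i} = ∅ := by
    ext t
    simp only [Set.mem_setOf_eq, Set.mem_empty_iff_false, iff_false, not_exists]
    rintro s ⟨hs, -⟩
    have h1 := Finset.card_le_univ s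
    simp only [Finset.card_univ, Fintype.card_fin, hs] at h1
    omega
  rw [kMaxSum, he, Real.sSup_empty]

lemma majorized_of_pS {n : ℕ} {x z : Fin n → ℝ} (hxa : Antitone x) (hza : Antitone z)
    (h : ∀ k ≤ n, pS x k ≤ pS z k) : Majorized x z := by
  intro k
  by_cases hk : k ≤ n
  · rw [kMaxSum_eq_pS hxa hk, kMaxSum_eq_pS hza hk]
    exact h k hk
  · rw [kMaxSum_eq_zero x (by omega), kMaxSum_eq_zero z (by omega)]

lemma pS_le_of_majorized {n : ℕ} {x z : Fin n → ℝ} (hxa : Antitone x) (hza : Antitone z)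
    (h : Majorized x z) : ∀ k ≤ n, pS x k ≤ pS z k := by
  intro k hk
  have := h k
  rwa [kMaxSum_eq_pS hxa hk, kMaxSum_eq_pS hza hk] at this

/-- Any two elements of `P^n_c` (nonnegative, non-increasingly ordered vectors summing
to a constant `c > 0`) have a unique least upper bound with respect to majorization. -/
theorem unique_lub_majorization_const_sum {n : ℕ} (c : ℝ) (hc : 0 < c) (x y : Fin n → ℝ)
    (hx0 : ∀ i, 0 ≤ x i) (hx1 : ∑ i, x i = c) (hxa : Antitone x)
    (hy0 : ∀ i, 0 ≤ y i) (hy1 : ∑ i, y i = c) (hya : Antitone y) :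
    ∃! z : Fin n → ℝ,
      ((∀ i, 0 ≤ z i) ∧ (∑ i, z i = c) ∧ Antitone z) ∧
      Majorized x z ∧ Majorized y z ∧
      ∀ w : Fin n → ℝ, (∀ i, 0 ≤ w i) → (∑ i, w i = c) → Antitone w →
        Majorized x w → Majorized y w → Majorized z w := by
  -- n is positive
  have hn : 0 < n := by
    rcases Nat.eq_zero_or_pos n with h | h
    · subst h
      simp at hx1
      linarith
    · exact h
  -- the lower-envelope function to be majorized
  set f : ℕ → ℝ := fun k => max (pS x k) (pS y k) with hf
  have hpSx_le : ∀ k ≤ n, pS x k ≤ c := by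
    intro k hk
    have := pS_mono hx0 hk
    rwa [pS_univ, hx1] at this
  have hpSy_le : ∀ k ≤ n, pS y k ≤ c := by
    intro k hk
    have := pS_mono hy0 hk
    rwa [pS_univ, hy1] at this
  have hf0 : f 0 = 0 := by simp [hf, pS_zero]
  have hfn : f n = c := by simp [hf, pS_univ, hx1, hy1]
  have hf_le : ∀ k ≤ n, f k ≤ c := fun k hk =>
    max_le (hpSx_le k hk) (hpSy_le k hk)
  -- the set of discrete concave majorants of f
  set C : Set (ℕ → ℝ) := {g | (∀ j, j + 1 < n → g (j + 2) + g j ≤ 2 * g (j + 1)) ∧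
    (∀ k ≤ n, f k ≤ g k)} with hC
  set g₀ : ℕ → ℝ := fun k => if k = 0 then 0 else c with hg₀def
  have hg₀ : g₀ ∈ C := by
    constructor
    · intro j hj
      by_cases h : j = 0 <;> simp [hg₀def, h] <;> linarith
    · intro k hk
      by_cases h : k = 0
      · simp [hg₀def, h, hf0]
      · simpa [hg₀def, h] using hf_le k hk
  -- the least concave majorant
  set H : ℕ → ℝ := fun k => sInf {t | ∃ g ∈ C, t = g k} with hHdef
  have hne : ∀ k, {t | ∃ g ∈ C, t = g k}.Nonempty := fun k => ⟨g₀ k, g₀, hg₀, rfl⟩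
  have hbdd : ∀ k ≤ n, BddBelow {t | ∃ g ∈ C, t = g k} := by
    intro k hk
    refine ⟨f k, ?_⟩
    rintro t ⟨g, hg, rfl⟩
    exact hg.2 k hk
  have hH_le : ∀ g ∈ C, ∀ k ≤ n, H k ≤ g k := fun g hg k hk =>
    csInf_le (hbdd k hk) ⟨g, hg, rfl⟩
  have hle_H : ∀ k ≤ n, f k ≤ H k := by
    intro k hk
    apply le_csInf (hne k)
    rintro t ⟨g, hg, rfl⟩
    exact hg.2 k hk
  have hH0 : H 0 = 0 := by
    have h1 := hH_le g₀ hg₀ 0 (Nat.zero_le n)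
    have h2 := hle_H 0 (Nat.zero_le n)
    simp [hg₀def] at h1
    rw [hf0] at h2
    linarith
  have hHn : H n = c := by
    have h1 := hH_le g₀ hg₀ n le_rfl
    have h2 := hle_H n le_rfl
    rw [hfn] at h2
    simp only [hg₀def] at h1
    rw [if_neg (by omega)] at h1
    linarith
  have hH_le_c : ∀ k ≤ n, H k ≤ c := by
    intro k hk
    have h1 := hH_le g₀ hg₀ k hk
    by_cases h : k = 0
    · simp [h, hH0]; linarith
    · simpa [hg₀def, h] using h1
  -- discrete concavity of H
  have hHconc : ∀ j, j + 1 < n → H (j + 2) + H j ≤ 2 * H (j + 1) := by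
    intro j hj
    have : (H (j + 2) + H j) / 2 ≤ H (j + 1) := by
      apply le_csInf (hne (j + 1))
      rintro t ⟨g, hg, rfl⟩
      have h1 := hH_le g hg (j + 2) (by omega)
      have h2 := hH_le g hg j (by omega)
      have h3 := hg.1 j hj
      linarith
    linarith
  -- the increment sequence
  set D : ℕ → ℝ := fun j => if j + 1 ≤ n then H (j + 1) - H j else 0 with hDdef
  have hD_anti : Antitone D := by
    apply antitone_nat_of_succ_le
    intro j
    by_cases h1 : j + 2 ≤ n
    · rw [hDdef]
      simp only [if_pos h1, if_pos (by omega : j + 1 ≤ n)]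
      have := hHconc j (by omega)
      linarith
    · by_cases h2 : j + 1 ≤ n
      · have hjn : j + 1 = n := by omega
        rw [hDdef]
        simp only [if_neg h1, if_pos h2]
        have := hH_le_c j (by omega)
        rw [hjn, hHn]
        linarith
      · rw [hDdef]
        simp [if_neg h1, if_neg h2, show ¬ j + 1 < n by omega, show ¬ j < n by omega]
  have hD_nonneg : ∀ j, j < n → 0 ≤ D j := by
    intro j hj
    have h1 : D (n - 1) ≤ D j := hD_anti (by omega)
    have h2 : D (n - 1) = c - H (n - 1) := by
      rw [hDdef]
      simp only [if_pos (by omega : n - 1 + 1 ≤ n)]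
      rw [(by omega : n - 1 + 1 = n), hHn]
    have h3 := hH_le_c (n - 1) (by omega)
    linarith
  -- the candidate LUB
  set z : Fin n → ℝ := fun i => H ((i : ℕ) + 1) - H (i : ℕ) with hzdef
  have hzD : ∀ i : Fin n, z i = D (i : ℕ) := by
    intro i
    rw [hzdef, hDdef]
    simp [Nat.succ_le_of_lt i.2]
  have hz0 : ∀ i, 0 ≤ z i := fun i => (hzD i) ▸ hD_nonneg i i.2
  have hza : Antitone z := by
    intro i i' hii'
    rw [hzD i, hzD i']
    exact hD_anti (Fin.le_def.mp hii')
  have hpSz : ∀ k ≤ n, pS z k = H k := by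
    intro k hk
    have : pS z k = ∑ j ∈ Finset.range k, (H (j + 1) - H j) := by
      apply Finset.sum_congr rfl
      intro j hj
      have hjn : j < n := lt_of_lt_of_le (Finset.mem_range.mp hj) hk
      rw [dif_pos hjn]
    rw [this, Finset.sum_range_sub (f := H), hH0, sub_zero]
  have hz1 : ∑ i, z i = c := by
    rw [← pS_univ, hpSz n le_rfl, hHn]
  have hxz : Majorized x z := by
    apply majorized_of_pS hxa hza
    intro k hk
    calc pS x k ≤ f k := le_max_left _ _
    _ ≤ H k := hle_H k hk
    _ = pS z k := (hpSz k hk).symm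
  have hyz : Majorized y z := by
    apply majorized_of_pS hya hza
    intro k hk
    calc pS y k ≤ f k := le_max_right _ _
    _ ≤ H k := hle_H k hk
    _ = pS z k := (hpSz k hk).symm
  have hmin : ∀ w : Fin n → ℝ, (∀ i, 0 ≤ w i) → (∑ i, w i = c) → Antitone w →
      Majorized x w → Majorized y w → Majorized z w := by
    intro w hw0 hw1 hwa hxw hyw
    have hgw : (fun k => pS w k) ∈ C := by
      constructor
      · intro j hj
        have e1 : pS w (j + 1) = pS w j + w ⟨j, by omega⟩ := pS_succ w (by omega)
        have e2 : pS w (j + 2) = pS w (j + 1) + w ⟨j + 1, by omega⟩ := pS_succ w (by omega)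
        have e3 : w ⟨j + 1, by omega⟩ ≤ w ⟨j, by omega⟩ := hwa (by simp [Fin.le_def])
        linarith
      · intro k hk
        apply max_le
        · exact pS_le_of_majorized hxa hwa hxw k hk
        · exact pS_le_of_majorized hya hwa hyw k hk
    apply majorized_of_pS hza hwa
    intro k hk
    rw [hpSz k hk]
    exact hH_le _ hgw k hk
  refine ⟨z, ⟨⟨hz0, hz1, hza⟩, hxz, hyz, hmin⟩, ?_⟩
  rintro z' ⟨⟨hz'0, hz'1, hz'a⟩, hxz', hyz', hmin'⟩
  have h1 : Majorized z' z := hmin' z hz0 hz1 hza hxz hyz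
  have h2 : Majorized z z' := hmin z' hz'0 hz'1 hz'a hxz' hyz'
  have hps : ∀ k ≤ n, pS z' k = pS z k := by
    intro k hk
    exact le_antisymm (pS_le_of_majorized hz'a hza h1 k hk)
      (pS_le_of_majorized hza hz'a h2 k hk)
  funext i
  have e1 : pS z' ((i : ℕ) + 1) = pS z' (i : ℕ) + z' i := by
    rw [pS_succ z' i.2]
  have e2 : pS z ((i : ℕ) + 1) = pS z (i : ℕ) + z i := by
    rw [pS_succ z i.2]
  have e3 := hps ((i : ℕ) + 1) i.2
  have e4 := hps (i : ℕ) (le_of_lt i.2)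
  linarith
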